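/- Let D ∈ ℂ^{d×n} be a dictionary, let I ⊆ {1,…,n} be any index set, and let D̃ = [D, D_I] ∈ ℂ^{d×(n+|I|)} be the matrix obtained by appending to D the columns of D indexed by I. Then for any matrix A ∈ ℂ^{m×d} and any k, A satisfies the D-null space property of order k if and only if A satisfies the D̃-null space property of order k. -/

import Mathlib

open Finset Matrix

/-- The ℓ¹ norm of a vector: the sum of the absolute values of its entries. -/
noncomputable def l1norm {n : Type*} [Fintype n] (v : n → ℂ) : ℝ :=
  ∑ i, ‖v i‖

/-- The ℓ² (Euclidean) norm of a vector. -/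
noncomputable def l2norm {n : Type*} [Fintype n] (v : n → ℂ) : ℝ :=
  Real.sqrt (∑ i, ‖v i‖ ^ 2)

/-- `restrict v T` agrees with `v` on the index set `T` and is zero elsewhere. -/
def restrict {n : Type*} [Fintype n] [DecidableEq n] (v : n → ℂ) (T : Finset n) : n → ℂ :=
  fun i => if i ∈ T then v i else 0

/-- A vector is `k`-sparse if it has at most `k` nonzero entries. -/
def KSparse {n : Type*} [Fintype n] [DecidableEq n] (k : ℕ) (z : n → ℂ) : Prop :=
  ∃ T : Finset n, T.card ≤ k ∧ ∀ i ∉ T, z i = 0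

/-- `A` satisfies the `D`-null space property of order `k` (`k`-`D`-NSP):
for every index set `T` with `|T| ≤ k` and every `v` with `Dv ∈ ker A` and `Dv ≠ 0`,
there exists `u ∈ ker D` such that `‖v_T + u‖₁ < ‖v_{T^c}‖₁`. -/
def DNSP {m d n : Type*} [Fintype m] [Fintype d] [Fintype n] [DecidableEq n]
    (A : Matrix m d ℂ) (D : Matrix d n ℂ) (k : ℕ) : Prop :=
  ∀ T : Finset n, T.card ≤ k → ∀ v : n → ℂ,
    A.mulVec (D.mulVec v) = 0 → D.mulVec v ≠ 0 →
    ∃ u : n → ℂ, D.mulVec u = 0 ∧ l1norm (restrict v T + u) < l1norm (restrict v Tᶜ)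

/-- `M` satisfies the null space property of order `k` (`k`-NSP):
for every nonzero `v ∈ ker M` and every index set `T` with `|T| ≤ k`,
`‖v_T‖₁ < ‖v_{T^c}‖₁`. -/
def NSP {m n : Type*} [Fintype m] [Fintype n] [DecidableEq n]
    (M : Matrix m n ℂ) (k : ℕ) : Prop :=
  ∀ v : n → ℂ, M.mulVec v = 0 → v ≠ 0 → ∀ T : Finset n, T.card ≤ k →
    l1norm (restrict v T) < l1norm (restrict v Tᶜ)

/-- `A` satisfies the strong `D`-null space property of order `k` with constant `c`
(`k`-`D`-SNSP): for every index set `T` with `|T| ≤ k` and every `v ∈ ker (AD)`,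
there exists `u ∈ ker D` such that `‖v_{T^c}‖₁ − ‖v_T + u‖₁ ≥ c‖Dv‖₂`. -/
def DSNSP {m d n : Type*} [Fintype m] [Fintype d] [Fintype n] [DecidableEq n]
    (A : Matrix m d ℂ) (D : Matrix d n ℂ) (k : ℕ) (c : ℝ) : Prop :=
  ∀ T : Finset n, T.card ≤ k → ∀ v : n → ℂ, (A * D).mulVec v = 0 →
    ∃ u : n → ℂ, D.mulVec u = 0 ∧
      c * l2norm (D.mulVec v) ≤ l1norm (restrict v Tᶜ) - l1norm (restrict v T + u)

/-- A `d × n` matrix is full spark if every `d` of its columns are linearly independent. -/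
def FullSpark {d n : ℕ} (D : Matrix (Fin d) (Fin n) ℂ) : Prop :=
  ∀ S : Finset (Fin n), S.card = d →
    LinearIndependent ℂ (fun j : S => Dᵀ (j : Fin n))

section Aux
variable {ι : Type*} [Fintype ι]

lemma l1norm_add_le (a b : ι → ℂ) : l1norm (a + b) ≤ l1norm a + l1norm b := by
  rw [l1norm, l1norm, l1norm, ← Finset.sum_add_distrib]
  exact Finset.sum_le_sum fun i _ => norm_add_le _ _

lemma l1norm_neg (a : ι → ℂ) : l1norm (-a) = l1norm a := by
  simp [l1norm]

lemma l1norm_sub_le (a b : ι → ℂ) : l1norm (a - b) ≤ l1norm a + l1norm b := by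
  rw [sub_eq_add_neg, ← l1norm_neg b]
  exact l1norm_add_le a (-b)

lemma l1norm_restrict_add [DecidableEq ι] (v : ι → ℂ) (S : Finset ι) :
    l1norm (restrict v S) + l1norm (restrict v Sᶜ) = l1norm v := by
  rw [l1norm, l1norm, l1norm, ← Finset.sum_add_distrib]
  refine Finset.sum_congr rfl fun i _ => ?_
  by_cases h : i ∈ S <;> simp [_root_.restrict, h]

lemma restrict_add_compl [DecidableEq ι] (v : ι → ℂ) (S : Finset ι) :
    restrict v S + restrict v Sᶜ = v := by
  funext i
  by_cases h : i ∈ S <;> simp [_root_.restrict, h]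

lemma l1norm_sum_type {α β : Type*} [Fintype α] [Fintype β] (x : α ⊕ β → ℂ) :
    l1norm x = l1norm (fun a => x (Sum.inl a)) + l1norm (fun b => x (Sum.inr b)) := by
  rw [l1norm, l1norm, l1norm, Fintype.sum_sum_type]

end Aux

noncomputable def phi {n : ℕ} (I : Finset (Fin n)) (x : Fin n ⊕ {j // j ∈ I} → ℂ) : Fin n → ℂ :=
  fun i => x (Sum.inl i) + ∑ j : {j // j ∈ I}, if (j : Fin n) = i then x (Sum.inr j) else 0

lemma phi_add {n : ℕ} (I : Finset (Fin n)) (x y : Fin n ⊕ {j // j ∈ I} → ℂ) :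
    phi I (x + y) = phi I x + phi I y := by
  funext i
  simp only [phi, Pi.add_apply]
  have h : ∀ j : {j // j ∈ I}, (if (j : Fin n) = i then x (Sum.inr j) + y (Sum.inr j) else 0)
      = (if (j : Fin n) = i then x (Sum.inr j) else 0) + (if (j : Fin n) = i then y (Sum.inr j) else 0) := by
    intro j; split_ifs <;> simp
  rw [Finset.sum_congr rfl fun j _ => h j, Finset.sum_add_distrib]
  ring

lemma phi_sub {n : ℕ} (I : Finset (Fin n)) (x y : Fin n ⊕ {j // j ∈ I} → ℂ) :
    phi I (x - y) = phi I x - phi I y := by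
  funext i
  simp only [phi, Pi.sub_apply]
  have h : ∀ j : {j // j ∈ I}, (if (j : Fin n) = i then x (Sum.inr j) - y (Sum.inr j) else 0)
      = (if (j : Fin n) = i then x (Sum.inr j) else 0) - (if (j : Fin n) = i then y (Sum.inr j) else 0) := by
    intro j; split_ifs <;> simp
  rw [Finset.sum_congr rfl fun j _ => h j, Finset.sum_sub_distrib]
  ring

lemma phi_elim {n : ℕ} (I : Finset (Fin n)) (f : Fin n → ℂ) :
    phi I (Sum.elim f 0) = f := by
  funext i
  simp [phi]

lemma mulVec_phi {d n : ℕ} (D : Matrix (Fin d) (Fin n) ℂ) (I : Finset (Fin n))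
    (Dtil : Matrix (Fin d) (Fin n ⊕ {j // j ∈ I}) ℂ)
    (hDtil : Dtil = Matrix.of fun i => Sum.elim (D i) (fun j : {j // j ∈ I} => D i (j : Fin n)))
    (x : Fin n ⊕ {j // j ∈ I} → ℂ) :
    Dtil.mulVec x = D.mulVec (phi I x) := by
  subst hDtil
  funext i
  simp only [mulVec, dotProduct, phi]
  rw [Fintype.sum_sum_type]
  simp only [of_apply, Sum.elim_inl, Sum.elim_inr]
  have h2 : ∑ j : Fin n, D i j * (∑ j' : {j // j ∈ I}, if (j' : Fin n) = j then x (Sum.inr j') else 0)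
      = ∑ j' : {j // j ∈ I}, D i (j' : Fin n) * x (Sum.inr j') := by
    simp only [Finset.mul_sum]
    rw [Finset.sum_comm]
    refine Finset.sum_congr rfl fun j' _ => ?_
    have h3 : ∀ j : Fin n, (D i j * if (j' : Fin n) = j then x (Sum.inr j') else 0)
        = if (j' : Fin n) = j then D i j * x (Sum.inr j') else 0 := by
      intro j; split_ifs <;> simp
    rw [Finset.sum_congr rfl fun j _ => h3 j, Finset.sum_ite_eq]
    simp
  simp only [mul_add, Finset.sum_add_distrib, h2]

lemma l1norm_phi_le {n : ℕ} (I : Finset (Fin n)) (x : Fin n ⊕ {j // j ∈ I} → ℂ) :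
    l1norm (phi I x) ≤ l1norm x := by
  have step : ∀ i : Fin n, ‖phi I x i‖
      ≤ ‖x (Sum.inl i)‖ + ∑ j : {j // j ∈ I}, if (j : Fin n) = i then ‖x (Sum.inr j)‖ else 0 := by
    intro i
    refine le_trans (norm_add_le _ _) ?_
    gcongr
    refine le_trans (norm_sum_le _ _) (le_of_eq ?_)
    refine Finset.sum_congr rfl fun j _ => ?_
    split_ifs <;> simp
  calc l1norm (phi I x)
      ≤ ∑ i : Fin n, (‖x (Sum.inl i)‖ + ∑ j : {j // j ∈ I}, if (j : Fin n) = i then ‖x (Sum.inr j)‖ else 0) :=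
        Finset.sum_le_sum fun i _ => step i
    _ = l1norm x := by
        rw [l1norm_sum_type x, Finset.sum_add_distrib]
        congr 1
        rw [Finset.sum_comm]
        simp [l1norm, Finset.sum_ite_eq]

/-- Proposition 1 (paper): appending to `D` a copy of the columns indexed by `I` does not
change the `D`-null space property: `A` is `k`-`D`-NSP iff `A` is `k`-`D̃`-NSP, where
`D̃ = [D, D_I]`. -/
theorem stmt_2 {m d n : ℕ} (A : Matrix (Fin m) (Fin d) ℂ) (D : Matrix (Fin d) (Fin n) ℂ)
    (I : Finset (Fin n)) (k : ℕ)
    (Dtil : Matrix (Fin d) (Fin n ⊕ {j // j ∈ I}) ℂ)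
    (hDtil : Dtil = Matrix.of fun i => Sum.elim (D i) (fun j : {j // j ∈ I} => D i (j : Fin n))) :
    DNSP A D k ↔ DNSP A Dtil k := by
  constructor
  · -- forward
    intro h T hT v' hAv hv0
    set w : Fin n → ℂ := phi I v' with hw
    have hDw : Dtil.mulVec v' = D.mulVec w := mulVec_phi D I Dtil hDtil v'
    set S : Finset (Fin n) := T.image (Sum.elim id (fun j : {j // j ∈ I} => (j : Fin n))) with hSdef
    have hScard : S.card ≤ k := le_trans Finset.card_image_le hT
    obtain ⟨u, hDu, hlt⟩ := h S hScard w (by rw [← hDw]; exact hAv) (by rw [← hDw]; exact hv0)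
    -- support facts
    have hsupp : ∀ i : Fin n, i ∉ S → phi I (restrict v' T) i = 0 := by
      intro i hi
      have h1 : Sum.inl i ∉ T := fun hc => hi (Finset.mem_image.mpr ⟨_, hc, rfl⟩)
      simp only [phi, _root_.restrict, if_neg h1]
      have h2 : ∀ j : {j // j ∈ I},
          (if (j : Fin n) = i then (if Sum.inr j ∈ T then v' (Sum.inr j) else 0) else 0) = 0 := by
        intro j
        split_ifs with hji hjT
        · exact absurd (Finset.mem_image.mpr ⟨Sum.inr j, hjT, hji⟩) hi
        · rfl
        · rfl
      rw [Finset.sum_congr rfl fun j _ => h2 j]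
      simp
    have hwsplit : ∀ i : Fin n, w i = phi I (restrict v' T) i + phi I (restrict v' Tᶜ) i := by
      intro i
      have h4 := congrFun (congrArg (phi I) (restrict_add_compl v' T)) i
      rw [hw, ← h4, phi_add]
      rfl
    -- define u'
    set u' : Fin n ⊕ {j // j ∈ I} → ℂ :=
      Sum.elim (fun i => phi I (restrict v' T) i + u i) 0 - restrict v' T with hu'def
    have key1 : restrict v' T + u' = Sum.elim (fun i => phi I (restrict v' T) i + u i) 0 := by
      rw [hu'def]; abel
    have hphiu' : phi I u' = u := by
      rw [hu'def, phi_sub, phi_elim]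
      funext i
      simp
    have hDu' : Dtil.mulVec u' = 0 := by
      rw [mulVec_phi D I Dtil hDtil, hphiu', hDu]
    have key2 : phi I (restrict v' T) + u
        = (restrict w S + u) - restrict (phi I (restrict v' Tᶜ)) S := by
      funext i
      simp only [Pi.add_apply, Pi.sub_apply, _root_.restrict]
      by_cases hi : i ∈ S
      · rw [if_pos hi, if_pos hi, hwsplit i]; ring
      · rw [if_neg hi, if_neg hi, hsupp i hi]; ring
    have key3 : restrict w Sᶜ = restrict (phi I (restrict v' Tᶜ)) Sᶜ := by
      funext i
      simp only [_root_.restrict]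
      by_cases hi : i ∈ Sᶜ
      · rw [if_pos hi, if_pos hi, hwsplit i, hsupp i (Finset.mem_compl.mp hi), zero_add]
      · rw [if_neg hi, if_neg hi]
    refine ⟨u', hDu', ?_⟩
    calc l1norm (restrict v' T + u')
        = l1norm (phi I (restrict v' T) + u) := by
          rw [key1, l1norm_sum_type]
          simp [l1norm]
      _ ≤ l1norm (restrict w S + u) + l1norm (restrict (phi I (restrict v' Tᶜ)) S) := by
          rw [key2]; exact l1norm_sub_le _ _
      _ < l1norm (restrict w Sᶜ) + l1norm (restrict (phi I (restrict v' Tᶜ)) S) := by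
          linarith [hlt]
      _ = l1norm (phi I (restrict v' Tᶜ)) := by
          rw [key3, add_comm]
          exact l1norm_restrict_add _ _
      _ ≤ l1norm (restrict v' Tᶜ) := l1norm_phi_le _ _
  · -- backward
    intro h T hT v hAv hv0
    set v' : Fin n ⊕ {j // j ∈ I} → ℂ := Sum.elim v 0 with hv'def
    have hphiv' : phi I v' = v := phi_elim I v
    have hDv' : Dtil.mulVec v' = D.mulVec v := by
      rw [mulVec_phi D I Dtil hDtil, hphiv']
    set T' : Finset (Fin n ⊕ {j // j ∈ I}) := T.map ⟨Sum.inl, Sum.inl_injective⟩ with hT'def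
    have hT'card : T'.card ≤ k := by rw [hT'def, Finset.card_map]; exact hT
    obtain ⟨u', hDu', hlt⟩ := h T' hT'card v' (by rw [hDv']; exact hAv) (by rw [hDv']; exact hv0)
    have hmem : ∀ i : Fin n, (Sum.inl i ∈ T') ↔ i ∈ T := by
      intro i; simp [hT'def]
    have hmem' : ∀ j : {j // j ∈ I}, Sum.inr j ∉ T' := by
      intro j; simp [hT'def]
    have hres : phi I (restrict v' T') = restrict v T := by
      funext i
      simp only [phi, _root_.restrict]
      have h2 : ∀ j : {j // j ∈ I},
          (if (j : Fin n) = i then (if Sum.inr j ∈ T' then v' (Sum.inr j) else 0) else 0) = 0 := by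
        intro j; simp [hmem' j]
      rw [Finset.sum_congr rfl fun j _ => h2 j]
      by_cases hi : i ∈ T <;> simp [hmem i, hi, hv'def]
    refine ⟨phi I u', by rw [← mulVec_phi D I Dtil hDtil, hDu'], ?_⟩
    calc l1norm (restrict v T + phi I u')
        = l1norm (phi I (restrict v' T' + u')) := by rw [phi_add, hres]
      _ ≤ l1norm (restrict v' T' + u') := l1norm_phi_le _ _
      _ < l1norm (restrict v' T'ᶜ) := hlt
      _ = l1norm (restrict v Tᶜ) := by
          rw [l1norm_sum_type]
          have h1 : (fun a => restrict v' T'ᶜ (Sum.inl a)) = restrict v Tᶜ := by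
            funext i
            simp [_root_.restrict, hmem i, hv'def]
          have h2 : l1norm (fun b : {j // j ∈ I} => restrict v' T'ᶜ (Sum.inr b)) = 0 := by
            simp [l1norm, _root_.restrict, hv'def]
          rw [h1, h2, add_zero]
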